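/- Let g : ℝ² → ℝ be a smooth compactly supported function and c := exp∘g. Then ∫_{ℝ²} c⁻³ |∇c|⁴ dx ≤ 25 ∫_{ℝ²} c |D²(ln c)|² dx. -/

import Mathlib

open MeasureTheory Real

noncomputable section

/-- The plane `ℝ²` as a Euclidean space. -/
abbrev E2 : Type := EuclideanSpace ℝ (Fin 2)

/-- `i`-th partial derivative of a scalar function on `ℝ²`. -/
def pd (i : Fin 2) (f : E2 → ℝ) (x : E2) : ℝ :=
  fderiv ℝ f x (EuclideanSpace.single i 1)

/-- Laplacian `Δf = ∑ i, ∂_i ∂_i f`. -/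
def lap (f : E2 → ℝ) (x : E2) : ℝ := ∑ i, pd i (pd i f) x

/-- `|∇f|² = ∑ i, (∂_i f)²`. -/
def gradSq (f : E2 → ℝ) (x : E2) : ℝ := ∑ i, (pd i f x) ^ 2

/-- Squared Frobenius norm of the Hessian: `|D²f|² = ∑ i j, (∂²_{ij} f)²`. -/
def hessSq (f : E2 → ℝ) (x : E2) : ℝ := ∑ i, ∑ j, (pd i (pd j f) x) ^ 2

/-- `⟨D²f ∇f, ∇f⟩ = ∑ i j, (∂²_{ij} f)(∂_i f)(∂_j f)`. -/
def hessGrad (f : E2 → ℝ) (x : E2) : ℝ :=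
  ∑ i, ∑ j, pd i (pd j f) x * pd i f x * pd j f x

end

lemma contDiff_pd {f : E2 → ℝ} (hf : ContDiff ℝ (⊤ : ℕ∞) f) (i : Fin 2) :
    ContDiff ℝ (⊤ : ℕ∞) (pd i f) :=
  ((hf.fderiv_right (m := ((⊤:ℕ∞) : WithTop ℕ∞)) (by norm_num)).clm_apply contDiff_const : )

lemma hcs_pd {f : E2 → ℝ} (hf : HasCompactSupport f) (i : Fin 2) :
    HasCompactSupport (pd i f) :=
  hf.fderiv_apply ℝ (EuclideanSpace.single i 1)

lemma pd_mul {f h : E2 → ℝ} {x : E2} (hf : DifferentiableAt ℝ f x)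
    (hh : DifferentiableAt ℝ h x) (i : Fin 2) :
    pd i (fun y => f y * h y) x = pd i f x * h x + f x * pd i h x := by
  simp [pd, fderiv_fun_mul hf hh]; ring

lemma pd_exp {f : E2 → ℝ} {x : E2} (hf : DifferentiableAt ℝ f x) (i : Fin 2) :
    pd i (fun y => Real.exp (f y)) x = Real.exp (f x) * pd i f x := by
  simp [pd, fderiv_exp hf]

lemma pd_sum {h : Fin 2 → E2 → ℝ} {x : E2} (hh : ∀ j, DifferentiableAt ℝ (h j) x) (i : Fin 2) :
    pd i (fun y => ∑ j, h j y) x = ∑ j, pd i (h j) x := by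
  simp only [pd]
  rw [fderiv_fun_sum (fun j _ => hh j)]
  simp

lemma integral_pd_eq_zero {f : E2 → ℝ} (hf : ContDiff ℝ (⊤ : ℕ∞) f)
    (hcs : HasCompactSupport f) (i : Fin 2) : ∫ x : E2, pd i f x = 0 := by
  have h := integral_mul_fderiv_eq_neg_fderiv_mul_of_integrable (μ := (volume : Measure E2))
    (f := fun _ : E2 => (1:ℝ)) (g := f) (v := EuclideanSpace.single i 1)
    (by simp)
    (by simp only [one_mul]; exact ((contDiff_pd hf i).continuous).integrable_of_hasCompactSupport (hcs_pd hcs i))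
    (by simpa using hf.continuous.integrable_of_hasCompactSupport hcs)
    (fun x _ => differentiableAt_const _) (fun x _ => hf.differentiable (by simp) x)
  simpa [pd, fderiv_fun_const] using h

lemma cs4 (a0 a1 a2 a3 b0 b1 b2 b3 : ℝ) :
    (a0*b0+a1*b1+a2*b2+a3*b3)^2 ≤ (a0^2+a1^2+a2^2+a3^2)*(b0^2+b1^2+b2^2+b3^2) := by
  nlinarith [sq_nonneg (a0*b1-a1*b0), sq_nonneg (a0*b2-a2*b0), sq_nonneg (a0*b3-a3*b0),
    sq_nonneg (a1*b2-a2*b1), sq_nonneg (a1*b3-a3*b1), sq_nonneg (a2*b3-a3*b2)]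

lemma scalar_ineq (Q L H h : ℝ) (hQ : 0 ≤ Q) (hh : 0 ≤ h) (hL : L^2 ≤ 2*h)
    (hH : H^2 ≤ h*Q^2) : 0 ≤ (3/5)*Q^2 + L*Q + 2*H + 5*h := by
  have hb1 : -(L*Q) ≤ (5/4)*L^2 + (1/5)*Q^2 := by nlinarith [sq_nonneg (L + (2/5)*Q)]
  have hX : 0 ≤ (5/2)*h + (2/5)*Q^2 := by positivity
  have hb2 : -(2*H) ≤ (5/2)*h + (2/5)*Q^2 := by
    nlinarith [hX, sq_nonneg ((5/2)*h - (2/5)*Q^2)]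
  linarith

/-- Inequality (3.11): for `c = exp ∘ g` with `g` smooth and compactly supported,
`∫ c⁻³ |∇c|⁴ ≤ 25 ∫ c |D²(ln c)|²`. -/
theorem stmt8 (g : E2 → ℝ) (hg : ContDiff ℝ (⊤ : ℕ∞) g) (hgc : HasCompactSupport g)
    (c : E2 → ℝ) (hc : c = fun x => Real.exp (g x)) :
    ∫ x : E2, (gradSq c x) ^ 2 / (c x) ^ 3
      ≤ 25 * ∫ x : E2, c x * hessSq (fun y => Real.log (c y)) x := by
  subst hc
  have hgd : Differentiable ℝ g := hg.differentiable (by simp)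
  have hPc : ∀ i, ContDiff ℝ (⊤ : ℕ∞) (pd i g) := contDiff_pd hg
  have hPd : ∀ i, Differentiable ℝ (pd i g) := fun i =>
    (hPc i).differentiable (by simp)
  have hSc : ∀ i j, ContDiff ℝ (⊤ : ℕ∞) (pd i (pd j g)) := fun i j => contDiff_pd (hPc j) i
  have hcsP : ∀ i, HasCompactSupport (pd i g) := fun i => hcs_pd hgc i
  have hcsS : ∀ i j, HasCompactSupport (pd i (pd j g)) := fun i j => hcs_pd (hcsP j) i
  have hQc : ContDiff ℝ (⊤ : ℕ∞) (gradSq g) := by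
    have e : gradSq g = fun x => ∑ i, pd i g x ^ 2 := rfl
    rw [e]; exact ContDiff.sum fun i _ => (hPc i).pow 2
  have hQd : Differentiable ℝ (gradSq g) := hQc.differentiable (by simp)
  have hcsQ : HasCompactSupport (gradSq g) := by
    have e : gradSq g = fun x => (pd 0 g x ^ 2 + pd 1 g x ^ 2) := by
      funext x; simp [gradSq, Fin.sum_univ_two]
    rw [e]
    exact ((hcsP 0).comp_left (g := fun t : ℝ => t ^ 2) (by simp)).add
      ((hcsP 1).comp_left (g := fun t : ℝ => t ^ 2) (by simp))
  have hQnn : ∀ x, 0 ≤ gradSq g x := fun x => Finset.sum_nonneg fun i _ => sq_nonneg _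
  have hHnn : ∀ x, 0 ≤ hessSq g x := fun x =>
    Finset.sum_nonneg fun i _ => Finset.sum_nonneg fun j _ => sq_nonneg _
  have hHcont : Continuous (hessSq g) := by
    have e : hessSq g = fun x => ∑ i, ∑ j, pd i (pd j g) x ^ 2 := rfl
    rw [e]
    exact continuous_finset_sum _ fun i _ => continuous_finset_sum _ fun j _ =>
      ((hSc i j).continuous.pow 2)
  have hcsH : HasCompactSupport (hessSq g) := by
    have e : hessSq g = fun x => ((pd 0 (pd 0 g) x ^ 2 + pd 0 (pd 1 g) x ^ 2)
        + (pd 1 (pd 0 g) x ^ 2 + pd 1 (pd 1 g) x ^ 2)) := by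
      funext x; simp [hessSq, Fin.sum_univ_two]
    rw [e]
    have sqcs : ∀ i j : Fin 2, HasCompactSupport (fun x => pd i (pd j g) x ^ 2) := fun i j =>
      (hcsS i j).comp_left (g := fun t : ℝ => t ^ 2) (by simp)
    exact ((sqcs 0 0).add (sqcs 0 1)).add ((sqcs 1 0).add (sqcs 1 1))
  have hpdexp : ∀ (x : E2) (i : Fin 2),
      pd i (fun y => Real.exp (g y)) x = Real.exp (g x) * pd i g x :=
    fun x i => pd_exp (hgd x) i
  -- derivative of gradSq
  have hpdQ : ∀ (x : E2) (i : Fin 2),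
      pd i (gradSq g) x = ∑ j, 2 * pd j g x * pd i (pd j g) x := by
    intro x i
    have e0 : pd i (gradSq g) x = pd i (fun y => ∑ j, pd j g y ^ 2) x := rfl
    rw [e0, pd_sum (h := fun j y => pd j g y ^ 2) (fun j => ((hPd j) x).pow 2) i]
    refine Finset.sum_congr rfl fun j _ => ?_
    have e2 : (fun y => pd j g y ^ 2) = fun y => pd j g y * pd j g y := by
      funext y; ring
    rw [e2, pd_mul ((hPd j) x) ((hPd j) x) i]; ring
  have hF : ∀ (x : E2) (i : Fin 2),
      pd i (fun y => Real.exp (g y) * (pd i g y * gradSq g y)) x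
      = Real.exp (g x) * pd i g x * (pd i g x * gradSq g x)
        + Real.exp (g x) * (pd i (pd i g) x * gradSq g x
          + pd i g x * (∑ j, 2 * pd j g x * pd i (pd j g) x)) := by
    intro x i
    rw [pd_mul (h := fun y => pd i g y * gradSq g y) ((hgd x).exp) (((hPd i) x).mul (hQd x)) i,
        pd_mul ((hPd i) x) (hQd x) i, hpdexp x i, hpdQ x i]
  have hdivpt : ∀ x : E2,
      (∑ i, pd i (fun y => Real.exp (g y) * (pd i g y * gradSq g y)) x)
      = Real.exp (g x) * (gradSq g x ^ 2 + lap g x * gradSq g x + 2 * hessGrad g x) := by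
    intro x
    rw [Fin.sum_univ_two, hF x 0, hF x 1]
    simp only [lap, gradSq, hessGrad, Fin.sum_univ_two]
    ring
  have hFc : ∀ i : Fin 2,
      ContDiff ℝ (⊤ : ℕ∞) (fun y => Real.exp (g y) * (pd i g y * gradSq g y)) :=
    fun i => hg.exp.mul ((hPc i).mul hQc)
  have hFcs : ∀ i : Fin 2,
      HasCompactSupport (fun y => Real.exp (g y) * (pd i g y * gradSq g y)) :=
    fun i => HasCompactSupport.mul_left ((hcsP i).mul_right)
  have hintF : ∀ i : Fin 2,
      Integrable (fun x : E2 => pd i (fun y => Real.exp (g y) * (pd i g y * gradSq g y)) x) :=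
    fun i => (contDiff_pd (hFc i) i).continuous.integrable_of_hasCompactSupport
      (hcs_pd (hFcs i) i)
  have hdiv0 : ∫ x : E2, Real.exp (g x)
      * (gradSq g x ^ 2 + lap g x * gradSq g x + 2 * hessGrad g x) = 0 := by
    rw [show (fun x : E2 => Real.exp (g x)
          * (gradSq g x ^ 2 + lap g x * gradSq g x + 2 * hessGrad g x))
        = fun x : E2 => ∑ i, pd i (fun y => Real.exp (g y) * (pd i g y * gradSq g y)) x
      from funext fun x => (hdivpt x).symm]
    rw [integral_finset_sum _ (fun i _ => hintF i), Fin.sum_univ_two,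
      integral_pd_eq_zero (hFc 0) (hFcs 0) 0, integral_pd_eq_zero (hFc 1) (hFcs 1) 1]
    norm_num
  -- pointwise bounds
  have hlapb : ∀ x : E2, lap g x ^ 2 ≤ 2 * hessSq g x := by
    intro x
    simp only [lap, hessSq, Fin.sum_univ_two]
    nlinarith [sq_nonneg (pd 0 (pd 0 g) x - pd 1 (pd 1 g) x), sq_nonneg (pd 0 (pd 1 g) x),
      sq_nonneg (pd 1 (pd 0 g) x)]
  have hCSb : ∀ x : E2, hessGrad g x ^ 2 ≤ hessSq g x * gradSq g x ^ 2 := by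
    intro x
    have h := cs4 (pd 0 (pd 0 g) x) (pd 0 (pd 1 g) x) (pd 1 (pd 0 g) x) (pd 1 (pd 1 g) x)
      (pd 0 g x * pd 0 g x) (pd 0 g x * pd 1 g x) (pd 1 g x * pd 0 g x) (pd 1 g x * pd 1 g x)
    simp only [hessGrad, hessSq, gradSq, Fin.sum_univ_two]
    nlinarith [h]
  have hpt : ∀ x : E2, (2/5) * (Real.exp (g x) * gradSq g x ^ 2)
      ≤ Real.exp (g x) * (gradSq g x ^ 2 + lap g x * gradSq g x + 2 * hessGrad g x)
        + 5 * (Real.exp (g x) * hessSq g x) := by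
    intro x
    have hs := scalar_ineq (gradSq g x) (lap g x) (hessGrad g x) (hessSq g x)
      (hQnn x) (hHnn x) (hlapb x) (hCSb x)
    nlinarith [mul_nonneg (Real.exp_pos (g x)).le hs]
  -- integrability
  have intA : Integrable (fun x : E2 => Real.exp (g x) * gradSq g x ^ 2) := by
    apply Continuous.integrable_of_hasCompactSupport
    · exact (Real.continuous_exp.comp hg.continuous).mul (hQc.continuous.pow 2)
    · exact HasCompactSupport.mul_left (hcsQ.comp_left (g := fun t : ℝ => t ^ 2) (by simp))
  have intB : Integrable (fun x : E2 => Real.exp (g x) * hessSq g x) :=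
    ((Real.continuous_exp.comp hg.continuous).mul hHcont).integrable_of_hasCompactSupport
      hcsH.mul_left
  have intDiv : Integrable (fun x : E2 => Real.exp (g x)
      * (gradSq g x ^ 2 + lap g x * gradSq g x + 2 * hessGrad g x)) := by
    rw [show (fun x : E2 => Real.exp (g x)
          * (gradSq g x ^ 2 + lap g x * gradSq g x + 2 * hessGrad g x))
        = fun x : E2 => ∑ i, pd i (fun y => Real.exp (g y) * (pd i g y * gradSq g y)) x
      from funext fun x => (hdivpt x).symm]
    exact integrable_finset_sum _ fun i _ => hintF i
  have hI2nn : 0 ≤ ∫ x : E2, Real.exp (g x) * hessSq g x :=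
    integral_nonneg fun x => mul_nonneg (Real.exp_pos _).le (hHnn x)
  have step : (2/5) * ∫ x : E2, Real.exp (g x) * gradSq g x ^ 2
      ≤ 5 * ∫ x : E2, Real.exp (g x) * hessSq g x := by
    rw [← integral_const_mul, ← integral_const_mul]
    calc ∫ x : E2, (2/5) * (Real.exp (g x) * gradSq g x ^ 2)
        ≤ ∫ x : E2, (Real.exp (g x)
            * (gradSq g x ^ 2 + lap g x * gradSq g x + 2 * hessGrad g x)
            + 5 * (Real.exp (g x) * hessSq g x)) :=
          integral_mono (intA.const_mul _) (intDiv.add (intB.const_mul 5)) hpt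
      _ = ∫ x : E2, 5 * (Real.exp (g x) * hessSq g x) := by
          rw [integral_add intDiv (intB.const_mul 5), hdiv0, zero_add]
  have main : ∫ x : E2, Real.exp (g x) * gradSq g x ^ 2
      ≤ 25 * ∫ x : E2, Real.exp (g x) * hessSq g x := by linarith
  -- transform the goal
  have hgrad2 : ∀ x : E2, gradSq (fun x => Real.exp (g x)) x ^ 2 / Real.exp (g x) ^ 3
      = Real.exp (g x) * gradSq g x ^ 2 := by
    intro x
    have h1 : gradSq (fun y => Real.exp (g y)) x = Real.exp (g x) ^ 2 * gradSq g x := by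
      simp only [gradSq, hpdexp x, Fin.sum_univ_two]; ring
    rw [h1, div_eq_iff (by positivity)]; ring
  simp only [Real.log_exp]
  simpa only [hgrad2] using main
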